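/- The surface S over F_4 defined by f = X_0³ + X_1³ + X_2²X_3 is Frobenius classical: with q = 4, the polynomial h = X_0⁶ + X_1⁶ + X_2²X_3⁴ satisfies h = f² + X_2²X_3²(X_3² - X_2²), and f does not divide h. -/
import Mathlib


open MvPolynomial

/-- The surface over `F₄` defined by `f = X₀³ + X₁³ + X₂²X₃` is Frobenius classical:
with `q = 4`, the polynomial `h = ∑ Xᵢ⁴ fᵢ = X₀⁶ + X₁⁶ + X₂²X₃⁴` satisfies
`h = f² + X₂²X₃²(X₃² - X₂²)`, and `f` does not divide `h`. -/
theorem stmt18 :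
    letI F4 := GaloisField 2 2
    letI f : MvPolynomial (Fin 4) F4 := X 0 ^ 3 + X 1 ^ 3 + X 2 ^ 2 * X 3
    letI h : MvPolynomial (Fin 4) F4 := X 0 ^ 6 + X 1 ^ 6 + X 2 ^ 2 * X 3 ^ 4
    h = ∑ i : Fin 4, X i ^ 4 * pderiv i f ∧
      h = f ^ 2 + X 2 ^ 2 * X 3 ^ 2 * (X 3 ^ 2 - X 2 ^ 2) ∧
      ¬ f ∣ h := by
  set F4 := GaloisField 2 2
  have h2 : (2 : F4) = 0 := by exact_mod_cast (CharP.cast_eq_zero F4 2)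
  have h2' : (2 : MvPolynomial (Fin 4) F4) = 0 := by
    rw [← map_ofNat (C : F4 →+* MvPolynomial (Fin 4) F4) 2, h2, map_zero]
  have h3 : (3 : MvPolynomial (Fin 4) F4) = 1 := by
    rw [show (3 : MvPolynomial (Fin 4) F4) = 2 + 1 by norm_num, h2', zero_add]
  refine ⟨?_, ?_, ?_⟩
  · show (X 0 ^ 6 + X 1 ^ 6 + X 2 ^ 2 * X 3 ^ 4 : MvPolynomial (Fin 4) F4) = _
    simp only [Fin.sum_univ_four, map_add, map_mul, map_pow, Derivation.leibniz,
      Derivation.leibniz_pow, pderiv_X, Pi.single_apply, smul_eq_mul]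
    norm_num
    simp only [Fin.reduceEq, if_true, if_false]
    ring_nf
    rw [h3]
    ring_nf
    rw [h2']
    ring
  · show (X 0 ^ 6 + X 1 ^ 6 + X 2 ^ 2 * X 3 ^ 4 : MvPolynomial (Fin 4) F4) = _
    ring_nf
    rw [h2']
    ring
  · intro hdvd
    -- get an element x with x ≠ 0, x ≠ 1
    obtain ⟨x, hx0, hx1⟩ : ∃ x : F4, x ≠ 0 ∧ x ≠ 1 := by
      haveI : Fintype F4 := Fintype.ofFinite _
      haveI := Classical.decEq F4
      by_contra hc
      push_neg at hc
      have hsub : (Finset.univ : Finset F4) ⊆ {0, 1} := by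
        intro y _
        rcases eq_or_ne y 0 with rfl | hy
        · simp
        · simp [hc y hy]
      have hcard : Fintype.card F4 ≤ 2 :=
        le_trans (Finset.card_le_card hsub) ((Finset.card_insert_le _ _).trans (by simp))
      have h4 : Nat.card F4 = 4 := GaloisField.card 2 2 (by norm_num)
      rw [Nat.card_eq_fintype_card] at h4
      omega
    -- f divides g
    have hg : (X 0 ^ 3 + X 1 ^ 3 + X 2 ^ 2 * X 3 : MvPolynomial (Fin 4) F4) ∣
        X 2 ^ 2 * X 3 ^ 2 * (X 3 ^ 2 - X 2 ^ 2) := by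
      have h1 : (X 0 ^ 6 + X 1 ^ 6 + X 2 ^ 2 * X 3 ^ 4 : MvPolynomial (Fin 4) F4) =
          (X 0 ^ 3 + X 1 ^ 3 + X 2 ^ 2 * X 3) ^ 2 + X 2 ^ 2 * X 3 ^ 2 * (X 3 ^ 2 - X 2 ^ 2) := by
        ring_nf
        rw [h2']
        ring
      have := dvd_sub hdvd (dvd_pow_self _ (two_ne_zero) : _ ∣ _ ^ 2)
      rwa [h1, add_sub_cancel_left] at this
    -- specialize
    let φ := aeval (R := F4) (fun i => ![Polynomial.X, 0, 1, Polynomial.C x] i)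
    have hφ := map_dvd φ hg
    have hf : φ (X 0 ^ 3 + X 1 ^ 3 + X 2 ^ 2 * X 3 : MvPolynomial (Fin 4) F4) =
        Polynomial.X ^ 3 + Polynomial.C x := by
      simp [φ]
    have hgc : φ (X 2 ^ 2 * X 3 ^ 2 * (X 3 ^ 2 - X 2 ^ 2) : MvPolynomial (Fin 4) F4) =
        Polynomial.C (x ^ 2 * (x ^ 2 - 1)) := by
      simp [φ]
    rw [hf, hgc] at hφ
    have hc0 : x ^ 2 * (x ^ 2 - 1) ≠ 0 := by
      have hx2 : x ^ 2 - 1 = (x - 1) ^ 2 := by linear_combination (x - 1) * h2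
      rw [hx2]
      exact mul_ne_zero (pow_ne_zero _ hx0) (pow_ne_zero _ (sub_ne_zero.mpr hx1))
    have hdeg := Polynomial.natDegree_le_of_dvd hφ (by rwa [Ne, Polynomial.C_eq_zero])
    rw [Polynomial.natDegree_X_pow_add_C, Polynomial.natDegree_C] at hdeg
    omega
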